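/- Let f : ℝ → ℝ be continuous with f(0)=0 such that t ↦ f(t)/|t| is strictly increasing on ℝ∖{0}, and F(t)=∫_0^t f(s)ds. Then f(t)/t > 2F(t)/t² for every t ≠ 0; equivalently, f(t)t > 2F(t) for all t ≠ 0. -/

import Mathlib

open MeasureTheory Filter Set Topology intervalIntegral

lemma key_aux (f : ℝ → ℝ) (hf : Continuous f) (hf0 : f 0 = 0)
    (hmono : StrictMonoOn (fun t => f t / |t|) {t : ℝ | t ≠ 0}) (t : ℝ) (ht : t ≠ 0) :
    2 * (∫ s in (0 : ℝ)..t, f s) < f t * t := by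
  set g : ℝ → ℝ := fun s => f t / t * s with hg
  have hgc : Continuous g := continuous_const.mul continuous_id
  have hig : (∫ s in (0:ℝ)..t, g s) = f t * t / 2 := by
    simp only [hg]
    rw [intervalIntegral.integral_const_mul, integral_id]
    field_simp
    ring
  rcases lt_or_gt_of_ne ht with htneg | htpos
  · -- t < 0 : g ≤ f on (t, 0], strict in between
    have hlt : ∀ s, t < s → s < 0 → g s < f s := by
      intro s hts hs0
      have h := hmono (a := t) (b := s) ht (ne_of_lt hs0) hts
      simp only at h
      rw [abs_of_neg htneg, abs_of_neg hs0] at h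
      have hs : (0:ℝ) < -s := by linarith
      have := (div_lt_div_iff₀ (by linarith : (0:ℝ) < -t) hs).mp h
      show f t / t * s < f s
      rw [div_mul_eq_mul_div, div_lt_iff_of_neg htneg]
      nlinarith [this]
    have hintlt : (∫ s in t..(0:ℝ), g s) < ∫ s in t..(0:ℝ), f s := by
      apply integral_lt_integral_of_continuousOn_of_le_of_exists_lt htneg
        hgc.continuousOn hf.continuousOn
      · intro x hx
        rcases eq_or_lt_of_le hx.2 with h0 | h0
        · simp [h0, hg, hf0]
        · exact (hlt x hx.1 h0).le
      · exact ⟨t/2, ⟨by linarith, by linarith⟩, hlt _ (by linarith) (by linarith)⟩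
    have e1 : (∫ s in (0:ℝ)..t, f s) = -∫ s in t..(0:ℝ), f s :=
      intervalIntegral.integral_symm t 0
    have e2 : (∫ s in (0:ℝ)..t, g s) = -∫ s in t..(0:ℝ), g s :=
      intervalIntegral.integral_symm t 0
    linarith
  · -- t > 0
    have hlt : ∀ s, 0 < s → s < t → f s < g s := by
      intro s hs0 hst
      have h := hmono (a := s) (b := t) (ne_of_gt hs0) ht hst
      simp only at h
      rw [abs_of_pos hs0, abs_of_pos htpos] at h
      have := (div_lt_div_iff₀ hs0 htpos).mp h
      show f s < f t / t * s
      rw [div_mul_eq_mul_div, lt_div_iff₀ htpos]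
      nlinarith
    have hintlt : (∫ s in (0:ℝ)..t, f s) < ∫ s in (0:ℝ)..t, g s := by
      apply integral_lt_integral_of_continuousOn_of_le_of_exists_lt htpos
        hf.continuousOn hgc.continuousOn
      · intro x hx
        rcases eq_or_lt_of_le hx.2 with h0 | h0
        · simp only [h0, hg]
          rw [div_mul_cancel₀ _ ht]
        · exact (hlt x hx.1 h0).le
      · exact ⟨t/2, ⟨by linarith, by linarith⟩, hlt _ (by linarith) (by linarith)⟩
    rw [hig] at hintlt; linarith

/-- Lemma 2.3(iii): if `t ↦ f(t)/|t|` is strictly increasing on `ℝ ∖ {0}`, then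
`f(t)/t > 2F(t)/t²` for every `t ≠ 0`; equivalently `f(t)t > 2F(t)` for `t ≠ 0`,
where `F(t) = ∫₀ᵗ f`. -/
theorem f_div_t_gt (f : ℝ → ℝ) (hf : Continuous f) (hf0 : f 0 = 0)
    (hmono : StrictMonoOn (fun t => f t / |t|) {t : ℝ | t ≠ 0}) :
    ∀ t : ℝ, t ≠ 0 →
      2 * (∫ s in (0 : ℝ)..t, f s) / t ^ 2 < f t / t ∧
      2 * (∫ s in (0 : ℝ)..t, f s) < f t * t := by
  intro t ht
  have key := key_aux f hf hf0 hmono t ht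
  refine ⟨?_, key⟩
  have ht2 : (0:ℝ) < t ^ 2 := by positivity
  have : f t / t = f t * t / t ^ 2 := by field_simp
  rw [this]
  exact div_lt_div_of_pos_right key ht2
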